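/- arXiv:2202.07109 — 2 statements merged into one kernel-verified Lean document; each statement's English description precedes it below -/
import Mathlib

section
/- Assume (A2) and (A5). Then μ is reducible if and only if for every i ∈ Ψ at least one of the following holds: (a) p_{i,j} + p_{i,j⁺} = p_{i⁺,j} + p_{i⁺,j⁺} for every j ∈ Ψ; (b) χ_{i⁺}·I_{1,σ} = χ_i·I_{2,σ} for every σ ∈ 𝒮*(i). -/
open scoped Classical ENNReal
open Filter MeasureTheory

noncomputable section

namespace MTM

/-- the edge relation of the directed graph `𝒢`: `(i,j) ∈ G₂ ↔ p i j > 0`. -/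
def edge (p : ℕ → ℕ → ℝ) (i j : ℕ) : Prop := 0 < p i j

/-- product of transition weights along a word. -/
def pword (p : ℕ → ℕ → ℝ) : List ℕ → ℝ
  | [] => 1
  | [_] => 1
  | a :: b :: t => p a b * pword p (b :: t)

/-- product of contraction ratios along a word. -/
def sword (sr : ℕ → ℕ → ℝ) : List ℕ → ℝ
  | [] => 1
  | [_] => 1
  | a :: b :: t => sr a b * sword sr (b :: t)

/-- `𝒯(σ)`: all lifts of a word, each letter `i` may be replaced by `i + N`. -/
def lifts (N : ℕ) : List ℕ → Finset (List ℕ)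
  | [] => {[]}
  | i :: t => (lifts N t).biUnion fun l => {i :: l, (i + N) :: l}

/-- `Γ(σ) = G_n ∩ 𝒯(σ)`. -/
def Gam (p : ℕ → ℕ → ℝ) (N : ℕ) (σ : List ℕ) : Finset (List ℕ) :=
  (lifts N σ).filter fun τ => τ.Chain' (edge p)

/-- words over the alphabet `Ψ = {1,…,N}`. -/
def isPsiWord (N : ℕ) (σ : List ℕ) : Prop :=
  σ ≠ [] ∧ ∀ x ∈ σ, x ∈ Finset.Icc 1 N

/-- `σ ∈ 𝒮_*`: a `Ψ`-word having at least one admissible lift. -/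
def isSword (p : ℕ → ℕ → ℝ) (N : ℕ) (σ : List ℕ) : Prop :=
  isPsiWord N σ ∧ (Gam p N σ).Nonempty

/-- `σ ∈ G_*`: admissible words over `Ω = {1,…,2N}`. -/
def isGword (p : ℕ → ℕ → ℝ) (N : ℕ) (σ : List ℕ) : Prop :=
  σ ≠ [] ∧ (∀ x ∈ σ, x ∈ Finset.Icc 1 (2 * N)) ∧ σ.Chain' (edge p)

/-- `σ ∈ H₁^*`: admissible words with all letters in `Ψ`. -/
def isH1word (p : ℕ → ℕ → ℝ) (N : ℕ) (σ : List ℕ) : Prop :=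
  σ ≠ [] ∧ (∀ x ∈ σ, x ∈ Finset.Icc 1 N) ∧ σ.Chain' (edge p)

/-- `σ ∈ H₂^*`: admissible words with all letters in `Υ = {N+1,…,2N}`. -/
def isH2word (p : ℕ → ℕ → ℝ) (N : ℕ) (σ : List ℕ) : Prop :=
  σ ≠ [] ∧ (∀ x ∈ σ, x ∈ Finset.Icc (N + 1) (2 * N)) ∧ σ.Chain' (edge p)

/-- `μ(J_σ) = Σ_{σ̃ ∈ Γ(σ)} χ_{σ̃₁} p_{σ̃}`. -/
def muJ (p : ℕ → ℕ → ℝ) (χ : ℕ → ℝ) (N : ℕ) (σ : List ℕ) : ℝ :=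
  ∑ τ ∈ Gam p N σ, χ (τ.headD 0) * pword p τ

/-- `ℰ_r(σ) = μ(J_σ) s_σ^r`, with `ℰ_r(θ) = 1` for the empty word. -/
def Er (p : ℕ → ℕ → ℝ) (χ : ℕ → ℝ) (sr : ℕ → ℕ → ℝ) (N : ℕ) (r : ℝ) (σ : List ℕ) : ℝ :=
  if σ = [] then 1 else muJ p χ N σ * sword sr σ ^ r

/-- `I_{1,σ}` resp. `I_{2,σ}`: the part of `μ(J_σ)` coming from lifts ending with `i`
(resp. with `i⁺`, when applied with `i + N`). -/
def Ipart (p : ℕ → ℕ → ℝ) (χ : ℕ → ℝ) (N : ℕ) (i : ℕ) (σ : List ℕ) : ℝ :=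
  ∑ τ ∈ (Gam p N σ).filter (fun τ => τ.getLastD 0 = i), χ (τ.headD 0) * pword p τ

/-- all words of a given length over a finite alphabet. -/
def wordsOfLen (S : Finset ℕ) : ℕ → Finset (List ℕ)
  | 0 => {[]}
  | n + 1 => (wordsOfLen S n).biUnion fun l => S.image fun a => a :: l

/-- `𝒮_n` as a finite set of words. -/
def Sn (p : ℕ → ℕ → ℝ) (N n : ℕ) : Finset (List ℕ) :=
  (wordsOfLen (Finset.Icc 1 N) n).filter (isSword p N)

/-- irreducibility of the sub-matrix of `p` indexed by `S`: the corresponding directed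
graph is strongly connected. -/
def irreducibleOn (p : ℕ → ℕ → ℝ) (S : Finset ℕ) : Prop :=
  ∀ i ∈ S, ∀ j ∈ S, ∃ c : List ℕ, (∀ x ∈ c, x ∈ S) ∧ List.Chain (edge p) i (c ++ [j])

/-- Assumption (A1): `P₁, P₂` irreducible and `P₄ = 0`. -/
def A1 (p : ℕ → ℕ → ℝ) (N : ℕ) : Prop :=
  irreducibleOn p (Finset.Icc 1 N) ∧
    irreducibleOn (fun a b => p (a + N) (b + N)) (Finset.Icc 1 N) ∧
    ∀ i ∈ Finset.Icc 1 N, ∀ j ∈ Finset.Icc 1 N, p (i + N) j = 0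

/-- Assumption (A2). -/
def A2 (p : ℕ → ℕ → ℝ) (N : ℕ) : Prop :=
  ∀ i ∈ Finset.Icc 1 N,
    2 ≤ ((Finset.Icc 1 N).filter fun j => 0 < p i j).card ∧
      2 ≤ ((Finset.Icc 1 N).filter fun j => 0 < p (i + N) (j + N)).card

/-- Assumption (A3): `ℳ_{i,j} = ∅` or `ℳ_{i,j} = {(i,j),(i,j⁺),(i⁺,j⁺)}`. -/
def A3 (p : ℕ → ℕ → ℝ) (N : ℕ) : Prop :=
  ∀ i ∈ Finset.Icc 1 N, ∀ j ∈ Finset.Icc 1 N,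
    (p i j = 0 ∧ p i (j + N) = 0 ∧ p (i + N) j = 0 ∧ p (i + N) (j + N) = 0) ∨
      (0 < p i j ∧ 0 < p i (j + N) ∧ p (i + N) j = 0 ∧ 0 < p (i + N) (j + N))

/-- Assumption (A4): `ℳ_{i,j} = ∅` or `ℳ_{i,j} = 𝒩_{i,j}`. -/
def A4 (p : ℕ → ℕ → ℝ) (N : ℕ) : Prop :=
  ∀ i ∈ Finset.Icc 1 N, ∀ j ∈ Finset.Icc 1 N,
    (p i j = 0 ∧ p i (j + N) = 0 ∧ p (i + N) j = 0 ∧ p (i + N) (j + N) = 0) ∨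
      (0 < p i j ∧ 0 < p i (j + N) ∧ 0 < p (i + N) j ∧ 0 < p (i + N) (j + N))

/-- Assumption (A5): `P₁` is irreducible. -/
def A5 (p : ℕ → ℕ → ℝ) (N : ℕ) : Prop := irreducibleOn p (Finset.Icc 1 N)

/-- `T_σ = T_{σ₁σ₂} ∘ ⋯ ∘ T_{σ_{n-1}σ_n}` (identity for words of length `≤ 1`). -/
def Tword {E : Type*} (T : ℕ → ℕ → E → E) : List ℕ → E → E
  | [], x => x
  | [_], x => x
  | a :: b :: t, x => T a b (Tword T (b :: t) x)

/-- the cylinder set `J_σ = T_σ (J_{σ_n})`. -/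
def Jword {E : Type*} (T : ℕ → ℕ → E → E) (J : ℕ → Set E) (σ : List ℕ) : Set E :=
  Tword T σ '' J (σ.getLastD 0)

/-- the Mauldin–Williams fractal `K = ⋂_k ⋃_{σ ∈ G_k} J_σ`. -/
def attractor {E : Type*} (p : ℕ → ℕ → ℝ) (N : ℕ) (T : ℕ → ℕ → E → E) (J : ℕ → Set E) :
    Set E :=
  ⋂ n : ℕ, ⋃ σ ∈ {σ : List ℕ | isGword p N σ ∧ σ.length = n + 1}, Jword T J σ

/-- `μ` is reducible: `μ = ν₁ ∘ π₁⁻¹` for the Markov-type measure `ν₁` associated with some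
`N × N` row-stochastic matrix and positive probability vector; equivalently, the cylinder
values of `μ` are of Markov type. -/
def reducible {E : Type*} [MeasurableSpace E] (p : ℕ → ℕ → ℝ) (N : ℕ)
    (T : ℕ → ℕ → E → E) (J : ℕ → Set E) (μ : Measure E) : Prop :=
  ∃ (pt : ℕ → ℕ → ℝ) (χt : ℕ → ℝ),
    (∀ i ∈ Finset.Icc 1 N, ∀ j ∈ Finset.Icc 1 N, 0 ≤ pt i j) ∧
      (∀ i ∈ Finset.Icc 1 N, ∑ j ∈ Finset.Icc 1 N, pt i j = 1) ∧
      (∀ i ∈ Finset.Icc 1 N, 0 < χt i) ∧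
      (∑ i ∈ Finset.Icc 1 N, χt i = 1) ∧
      ∀ σ : List ℕ, isSword p N σ →
        μ (Jword T J σ) = ENNReal.ofReal (χt (σ.headD 0) * pword pt σ)

/-- `e^r_{k,r}(μ)`: the `k`-th quantization error of order `r`, to the `r`-th power. -/
def quantErr {E : Type*} [PseudoMetricSpace E] [MeasurableSpace E] (r : ℝ) (μ : Measure E)
    (k : ℕ) : ℝ :=
  sInf ((fun α : Set E => ∫ x, Metric.infDist x α ^ r ∂μ) ''
    {α : Set E | α.Nonempty ∧ α.Finite ∧ α.ncard ≤ k})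

/-- the upper quantization coefficient `Q̄_r^s(μ) = limsup_k k^{r/s} e^r_{k,r}(μ)`. -/
def upperQC {E : Type*} [PseudoMetricSpace E] [MeasurableSpace E] (r s : ℝ)
    (μ : Measure E) : ℝ≥0∞ :=
  limsup (fun k : ℕ => ENNReal.ofReal ((k : ℝ) ^ (r / s) * quantErr r μ k)) atTop

/-- the lower quantization coefficient `Q̲_r^s(μ)`. -/
def lowerQC {E : Type*} [PseudoMetricSpace E] [MeasurableSpace E] (r s : ℝ)
    (μ : Measure E) : ℝ≥0∞ :=
  liminf (fun k : ℕ => ENNReal.ofReal ((k : ℝ) ^ (r / s) * quantErr r μ k)) atTop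

/-- the upper quantization dimension `D̄_r(μ) = limsup_k log k / (-log e_{k,r}(μ))`. -/
def upperQD {E : Type*} [PseudoMetricSpace E] [MeasurableSpace E] (r : ℝ)
    (μ : Measure E) : ℝ :=
  limsup (fun k : ℕ => Real.log k / (-Real.log (quantErr r μ k ^ (1 / r)))) atTop

/-- the lower quantization dimension `D̲_r(μ)`. -/
def lowerQD {E : Type*} [PseudoMetricSpace E] [MeasurableSpace E] (r : ℝ)
    (μ : Measure E) : ℝ :=
  liminf (fun k : ℕ => Real.log k / (-Real.log (quantErr r μ k ^ (1 / r)))) atTop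

/-- spectral radius of a real matrix: the largest modulus of a complex eigenvalue. -/
def specRad {n : Type*} [Fintype n] [DecidableEq n] (M : Matrix n n ℝ) : ℝ :=
  sSup (norm '' spectrum ℂ (M.map (algebraMap ℝ ℂ)))

/-- `A₁(s) = ((p_{i,j} s_{i,j}^r)^s)_{i,j=1}^N`. -/
def matA1 (p sr : ℕ → ℕ → ℝ) (N : ℕ) (r s : ℝ) : Matrix (Fin N) (Fin N) ℝ :=
  Matrix.of fun i j => (p (i.1 + 1) (j.1 + 1) * sr (i.1 + 1) (j.1 + 1) ^ r) ^ s

/-- `A₂(s) = ((p_{i⁺,j⁺} s_{i⁺,j⁺}^r)^s)_{i,j=1}^N`. -/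
def matA2 (p sr : ℕ → ℕ → ℝ) (N : ℕ) (r s : ℝ) : Matrix (Fin N) (Fin N) ℝ :=
  Matrix.of fun i j => (p (i.1 + 1 + N) (j.1 + 1 + N) * sr (i.1 + 1 + N) (j.1 + 1 + N) ^ r) ^ s

/-- `A₃(s) = ((p_{i,j⁺} s_{i,j⁺}^r)^s)_{i,j=1}^N`. -/
def matA3 (p sr : ℕ → ℕ → ℝ) (N : ℕ) (r s : ℝ) : Matrix (Fin N) (Fin N) ℝ :=
  Matrix.of fun i j => (p (i.1 + 1) (j.1 + 1 + N) * sr (i.1 + 1) (j.1 + 1 + N) ^ r) ^ s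

/-- `A₄(s) = ((p_{i⁺,j} s_{i⁺,j}^r)^s)_{i,j=1}^N`. -/
def matA4 (p sr : ℕ → ℕ → ℝ) (N : ℕ) (r s : ℝ) : Matrix (Fin N) (Fin N) ℝ :=
  Matrix.of fun i j => (p (i.1 + 1 + N) (j.1 + 1) * sr (i.1 + 1 + N) (j.1 + 1) ^ r) ^ s

/-- the block matrix `A(s) = [[A₁(s), A₃(s)], [A₄(s), A₂(s)]]`. -/
def matA (p sr : ℕ → ℕ → ℝ) (N : ℕ) (r s : ℝ) :
    Matrix (Fin N ⊕ Fin N) (Fin N ⊕ Fin N) ℝ :=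
  Matrix.fromBlocks (matA1 p sr N r s) (matA3 p sr N r s) (matA4 p sr N r s) (matA2 p sr N r s)

/-- `p̲ = min_{(i,j) ∈ G₂} p_{i,j}`. -/
def pMin (p : ℕ → ℕ → ℝ) (N : ℕ) : ℝ :=
  sInf {x | ∃ i ∈ Finset.Icc 1 (2 * N), ∃ j ∈ Finset.Icc 1 (2 * N), 0 < p i j ∧ x = p i j}

/-- `p̄ = max_{(i,j) ∈ G₂} p_{i,j}`. -/
def pMax (p : ℕ → ℕ → ℝ) (N : ℕ) : ℝ :=
  sSup {x | ∃ i ∈ Finset.Icc 1 (2 * N), ∃ j ∈ Finset.Icc 1 (2 * N), 0 < p i j ∧ x = p i j}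

/-- `s̲ = min_{(i,j) ∈ 𝒮₂} s_{i,j}`. -/
def sMin (p sr : ℕ → ℕ → ℝ) (N : ℕ) : ℝ :=
  sInf {x | ∃ i ∈ Finset.Icc 1 N, ∃ j ∈ Finset.Icc 1 N, isSword p N [i, j] ∧ x = sr i j}

/-- `s̄ = max_{(i,j) ∈ 𝒮₂} s_{i,j}`. -/
def sMax (p sr : ℕ → ℕ → ℝ) (N : ℕ) : ℝ :=
  sSup {x | ∃ i ∈ Finset.Icc 1 N, ∃ j ∈ Finset.Icc 1 N, isSword p N [i, j] ∧ x = sr i j}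

/-- `χ̲ = min_{1 ≤ i ≤ 2N} χ_i`. -/
def chiMin (χ : ℕ → ℝ) (N : ℕ) : ℝ := sInf {x | ∃ i ∈ Finset.Icc 1 (2 * N), x = χ i}

/-- `χ̄ = max_{1 ≤ i ≤ 2N} χ_i`. -/
def chiMax (χ : ℕ → ℝ) (N : ℕ) : ℝ := sSup {x | ∃ i ∈ Finset.Icc 1 (2 * N), x = χ i}

/-- `t` satisfies the defining property of `t_r`:
`(1/n) log Σ_{σ ∈ 𝒮_n} ℰ_r(σ)^{t/(t+r)} → 0`. -/
def trCond (p : ℕ → ℕ → ℝ) (χ : ℕ → ℝ) (sr : ℕ → ℕ → ℝ) (N : ℕ) (r t : ℝ) : Prop :=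
  0 < t ∧
    Tendsto (fun n : ℕ => (n : ℝ)⁻¹ *
      Real.log (∑ σ ∈ Sn p N n, Er p χ sr N r σ ^ (t / (t + r)))) atTop (nhds 0)

/-- the initial word of length `n` of an infinite sequence. -/
def seqTake (x : ℕ → ℕ) (n : ℕ) : List ℕ := (List.range n).map x

/-- `Γ` is a finite maximal antichain among the words satisfying `W`, with respect to the
infinite sequences satisfying `Wseq`. -/
def isMaxAntichain (W : List ℕ → Prop) (Wseq : (ℕ → ℕ) → Prop) (Γ : Finset (List ℕ)) : Prop :=
  (∀ σ ∈ Γ, W σ) ∧ (∀ σ ∈ Γ, ∀ τ ∈ Γ, σ ≠ τ → ¬σ <+: τ) ∧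
    ∀ x : ℕ → ℕ, Wseq x → ∃ n : ℕ, 1 ≤ n ∧ seqTake x n ∈ Γ

/-- infinite admissible sequences with letters in `Ψ`. -/
def isH1seq (p : ℕ → ℕ → ℝ) (N : ℕ) (x : ℕ → ℕ) : Prop :=
  (∀ n, x n ∈ Finset.Icc 1 N) ∧ ∀ n, 0 < p (x n) (x (n + 1))

/-- infinite admissible sequences with letters in `Υ`. -/
def isH2seq (p : ℕ → ℕ → ℝ) (N : ℕ) (x : ℕ → ℕ) : Prop :=
  (∀ n, x n ∈ Finset.Icc (N + 1) (2 * N)) ∧ ∀ n, 0 < p (x n) (x (n + 1))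

/-- minimal length of a word in `Γ`. -/
def minLen (Γ : Finset (List ℕ)) : ℕ := sInf {n | ∃ σ ∈ Γ, σ.length = n}

/-- maximal length of a word in `Γ`. -/
def maxLen (Γ : Finset (List ℕ)) : ℕ := sSup {n | ∃ σ ∈ Γ, σ.length = n}

/-- `Λ_{k,r} = {σ ∈ 𝒮^* : ℰ_r(σ) < c₁^k ≤ ℰ_r(σ^♭)}`. -/
def LamSet (p : ℕ → ℕ → ℝ) (χ : ℕ → ℝ) (sr : ℕ → ℕ → ℝ) (N : ℕ) (r c1 : ℝ) (k : ℕ) :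
    Set (List ℕ) :=
  {σ | isSword p N σ ∧ Er p χ sr N r σ < c1 ^ k ∧ c1 ^ k ≤ Er p χ sr N r σ.dropLast}

/-- `ℒ(σ) = {σ, σ⁺} ∪ {σ|_h ∗ (σ_{h+1}⁺, …, σ_n⁺) : 1 ≤ h ≤ n − 1}`. -/
def Lset (N : ℕ) (σ : List ℕ) : Finset (List ℕ) :=
  (Finset.range (σ.length + 1)).image fun h =>
    σ.take h ++ (σ.drop h).map (fun x => x + N)


section Aux

variable {p : ℕ → ℕ → ℝ} {χ : ℕ → ℝ} {N : ℕ}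

lemma getLastD_cons_ne_nil {l : List ℕ} (h : l ≠ []) (i d : ℕ) :
    (i :: l).getLastD d = l.getLastD d := by
  cases l with
  | nil => exact absurd rfl h
  | cons a l' => simp [List.getLastD_cons]

lemma lifts_spec : ∀ (σ τ : List ℕ), τ ∈ lifts N σ →
    τ.length = σ.length ∧
    (τ.headD 0 = σ.headD 0 ∨ τ.headD 0 = σ.headD 0 + N) ∧
    (τ.getLastD 0 = σ.getLastD 0 ∨ τ.getLastD 0 = σ.getLastD 0 + N)
  | [], τ, h => by
    simp only [lifts, Finset.mem_singleton] at h
    subst h; simp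
  | i :: t, τ, h => by
    simp only [lifts, Finset.mem_biUnion, Finset.mem_insert, Finset.mem_singleton] at h
    obtain ⟨l, hl, hτ⟩ := h
    obtain ⟨hlen, -, hlast⟩ := lifts_spec t l hl
    have hcase : ∀ c : ℕ, (c = i ∨ c = i + N) →
        ((c :: l).length = (i :: t).length ∧
        ((c :: l).headD 0 = (i :: t).headD 0 ∨ (c :: l).headD 0 = (i :: t).headD 0 + N) ∧
        ((c :: l).getLastD 0 = (i :: t).getLastD 0 ∨
          (c :: l).getLastD 0 = (i :: t).getLastD 0 + N)) := by
      intro c hc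
      refine ⟨by simp [hlen], by simpa using hc, ?_⟩
      cases t with
      | nil =>
        have : l = [] := List.length_eq_zero_iff.mp (by simpa using hlen)
        subst this
        simpa using hc
      | cons b t' =>
        have hlne : l ≠ [] := by
          intro hnil; rw [hnil] at hlen; simp at hlen
        rw [getLastD_cons_ne_nil hlne, getLastD_cons_ne_nil (by simp)]
        exact hlast
    rcases hτ with rfl | rfl
    · exact hcase i (Or.inl rfl)
    · exact hcase (i + N) (Or.inr rfl)

lemma mem_lifts_ne_nil {σ τ : List ℕ} (h : τ ∈ lifts N σ) (hσ : σ ≠ []) : τ ≠ [] := by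
  have := (lifts_spec σ τ h).1
  intro hnil
  rw [hnil] at this
  exact hσ (List.length_eq_zero_iff.mp this.symm)

lemma chain'_concat {R : ℕ → ℕ → Prop} (x : ℕ) :
    ∀ {τ : List ℕ}, τ ≠ [] →
      (List.Chain' R (τ ++ [x]) ↔ List.Chain' R τ ∧ R (τ.getLastD 0) x)
  | [], h => absurd rfl h
  | [a], _ => by simp [List.Chain', List.isChain_cons_cons, List.isChain_singleton]
  | a :: b :: t, _ => by
    have ih := chain'_concat (R := R) x (τ := b :: t) (by simp)
    have hg : (a :: b :: t).getLastD 0 = (b :: t).getLastD 0 :=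
      getLastD_cons_ne_nil (by simp) a 0
    have h1 : List.Chain' R ((a :: b :: t) ++ [x]) ↔
        R a b ∧ List.Chain' R ((b :: t) ++ [x]) := by
      rw [List.cons_append, List.cons_append]
      exact List.isChain_cons_cons
    rw [h1, ih, hg]
    simp only [List.Chain', List.isChain_cons_cons]
    tauto

lemma pword_concat {q : ℕ → ℕ → ℝ} (x : ℕ) :
    ∀ {τ : List ℕ}, τ ≠ [] → pword q (τ ++ [x]) = pword q τ * q (τ.getLastD 0) x
  | [], h => absurd rfl h
  | [a], _ => by simp [pword]
  | a :: b :: t, _ => by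
    have ih := pword_concat (q := q) x (τ := b :: t) (by simp)
    have hg : (a :: b :: t).getLastD 0 = (b :: t).getLastD 0 :=
      getLastD_cons_ne_nil (by simp) a 0
    have h1 : pword q ((a :: b :: t) ++ [x]) = q a b * pword q ((b :: t) ++ [x]) := by
      rw [List.cons_append, List.cons_append]
      rfl
    rw [h1, ih, hg, show pword q (a :: b :: t) = q a b * pword q (b :: t) from rfl]
    ring

lemma pword_nonneg {q : ℕ → ℕ → ℝ} :
    ∀ {τ : List ℕ}, (∀ a ∈ τ, ∀ b ∈ τ, 0 ≤ q a b) → 0 ≤ pword q τ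
  | [], _ => by simp [pword]
  | [a], _ => by simp [pword]
  | a :: b :: t, h => by
    have h1 : 0 ≤ q a b := h a (by simp) b (by simp)
    have h2 : 0 ≤ pword q (b :: t) := pword_nonneg fun x hx y hy =>
      h x (List.mem_cons_of_mem a hx) y (List.mem_cons_of_mem a hy)
    simpa [pword] using mul_nonneg h1 h2

lemma pword_pos : ∀ {τ : List ℕ}, List.Chain' (edge p) τ → 0 < pword p τ
  | [], _ => by simp [pword]
  | [a], _ => by simp [pword]
  | a :: b :: t, h => by
    simp only [List.Chain', List.isChain_cons_cons] at h
    have := pword_pos h.2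
    simpa [pword] using mul_pos h.1 this

lemma headD_concat {τ : List ℕ} (h : τ ≠ []) (x d : ℕ) : (τ ++ [x]).headD d = τ.headD d := by
  cases τ with
  | nil => exact absurd rfl h
  | cons a l => simp

lemma lifts_concat (N : ℕ) : ∀ (σ : List ℕ) (j : ℕ),
    lifts N (σ ++ [j]) = (lifts N σ).biUnion fun l => {l ++ [j], l ++ [j + N]}
  | [], j => by
    ext τ
    simp [lifts]
  | i :: t, j => by
    show lifts N (i :: (t ++ [j])) = _
    have ih := lifts_concat N t j
    ext τ
    simp only [lifts, ih, Finset.mem_biUnion, Finset.mem_insert, Finset.mem_singleton]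
    constructor
    · rintro ⟨l, ⟨m, hm, hl⟩, hτ⟩
      rcases hl with rfl | rfl <;> rcases hτ with rfl | rfl
      · exact ⟨i :: m, ⟨m, hm, Or.inl rfl⟩, Or.inl (by simp)⟩
      · exact ⟨(i + N) :: m, ⟨m, hm, Or.inr rfl⟩, Or.inl (by simp)⟩
      · exact ⟨i :: m, ⟨m, hm, Or.inl rfl⟩, Or.inr (by simp)⟩
      · exact ⟨(i + N) :: m, ⟨m, hm, Or.inr rfl⟩, Or.inr (by simp)⟩
    · rintro ⟨l, ⟨m, hm, hl⟩, hτ⟩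
      rcases hl with rfl | rfl <;> rcases hτ with rfl | rfl
      · exact ⟨m ++ [j], ⟨m, hm, Or.inl rfl⟩, Or.inl (by simp)⟩
      · exact ⟨m ++ [j + N], ⟨m, hm, Or.inr rfl⟩, Or.inl (by simp)⟩
      · exact ⟨m ++ [j], ⟨m, hm, Or.inl rfl⟩, Or.inr (by simp)⟩
      · exact ⟨m ++ [j + N], ⟨m, hm, Or.inr rfl⟩, Or.inr (by simp)⟩

lemma muJ_concat_sum (hp0 : ∀ i j, 0 ≤ p i j) (hN : 0 < N) {σ : List ℕ} (hσ : σ ≠ [])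
    (j : ℕ) :
    muJ p χ N (σ ++ [j]) = ∑ τ ∈ Gam p N σ,
      χ (τ.headD 0) * pword p τ * (p (τ.getLastD 0) j + p (τ.getLastD 0) (j + N)) := by
  classical
  have hjne : j ≠ j + N := by omega
  unfold muJ Gam
  have hfb : ((lifts N σ).biUnion fun l => ({l ++ [j], l ++ [j + N]} : Finset (List ℕ))).filter
      (fun τ => τ.Chain' (edge p)) = (lifts N σ).biUnion
        fun l => ({l ++ [j], l ++ [j + N]} : Finset (List ℕ)).filter
          (fun τ => τ.Chain' (edge p)) := by
    ext τ
    simp only [Finset.mem_filter, Finset.mem_biUnion]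
    tauto
  have hdisj : (↑(lifts N σ) : Set (List ℕ)).PairwiseDisjoint
      (fun l => ({l ++ [j], l ++ [j + N]} : Finset (List ℕ)).filter
        (fun τ => τ.Chain' (edge p))) := by
    intro τ₁ h₁ τ₂ h₂ hne
    simp only [Finset.disjoint_left, Finset.mem_filter, Finset.mem_insert,
      Finset.mem_singleton]
    rintro τ' ⟨h1, -⟩ ⟨h2, -⟩
    rcases h1 with rfl | rfl <;> rcases h2 with h2 | h2 <;>
      exact hne (List.append_inj' h2 rfl).1
  rw [lifts_concat, hfb, Finset.sum_biUnion hdisj]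
  conv_rhs => rw [Finset.sum_filter]
  apply Finset.sum_congr rfl
  intro τ hτ
  · have hτne : τ ≠ [] := mem_lifts_ne_nil hτ hσ
    have hpair : τ ++ [j] ≠ τ ++ [j + N] := by
      intro h
      exact hjne (by simpa using (List.append_inj' h rfl).2)
    by_cases hc : List.Chain' (edge p) τ
    · have e1 : ∀ x : ℕ, List.Chain' (edge p) (τ ++ [x]) ↔ edge p (τ.getLastD 0) x := by
        intro x
        rw [chain'_concat x hτne]
        exact and_iff_right hc
      have hw : ∀ x : ℕ, χ ((τ ++ [x]).headD 0) * pword p (τ ++ [x]) =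
          χ (τ.headD 0) * pword p τ * p (τ.getLastD 0) x := by
        intro x
        rw [headD_concat hτne, pword_concat x hτne, mul_assoc]
      rw [if_pos hc]
      by_cases h1 : edge p (τ.getLastD 0) j <;> by_cases h2 : edge p (τ.getLastD 0) (j + N)
      · rw [Finset.filter_insert, if_pos ((e1 j).mpr h1), Finset.filter_singleton,
          if_pos ((e1 (j + N)).mpr h2), Finset.sum_insert (by simpa using hpair),
          Finset.sum_singleton, hw, hw]
        ring
      · have hz : p (τ.getLastD 0) (j + N) = 0 :=
          le_antisymm (not_lt.mp h2) (hp0 _ _)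
        rw [Finset.filter_insert, if_pos ((e1 j).mpr h1), Finset.filter_singleton,
          if_neg (fun hh => h2 ((e1 (j + N)).mp hh)),
          Finset.sum_insert (Finset.notMem_empty _), Finset.sum_empty, hw, hz]
        ring
      · have hz : p (τ.getLastD 0) j = 0 := le_antisymm (not_lt.mp h1) (hp0 _ _)
        rw [Finset.filter_insert, if_neg (fun hh => h1 ((e1 j).mp hh)),
          Finset.filter_singleton, if_pos ((e1 (j + N)).mpr h2),
          Finset.sum_singleton, hw, hz]
        ring
      · have hz1 : p (τ.getLastD 0) j = 0 := le_antisymm (not_lt.mp h1) (hp0 _ _)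
        have hz2 : p (τ.getLastD 0) (j + N) = 0 := le_antisymm (not_lt.mp h2) (hp0 _ _)
        rw [Finset.filter_insert, if_neg (fun hh => h1 ((e1 j).mp hh)),
          Finset.filter_singleton, if_neg (fun hh => h2 ((e1 (j + N)).mp hh)),
          Finset.sum_empty, hz1, hz2]
        ring
    · have e0 : ∀ x : ℕ, ¬ List.Chain' (edge p) (τ ++ [x]) := by
        intro x hx
        exact hc ((chain'_concat x hτne).mp hx).1
      rw [if_neg hc, Finset.filter_insert, if_neg (e0 j), Finset.filter_singleton,
        if_neg (e0 (j + N)), Finset.sum_empty]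

lemma gam_last_mem {σ : List ℕ} (hσ : σ ≠ []) {τ : List ℕ} (hτ : τ ∈ Gam p N σ) :
    τ.getLastD 0 = σ.getLastD 0 ∨ τ.getLastD 0 = σ.getLastD 0 + N := by
  exact (lifts_spec σ τ (Finset.mem_filter.mp hτ).1).2.2

lemma sum_Gam_split (hN : 0 < N) {σ : List ℕ} (hσ : σ ≠ []) (F : List ℕ → ℝ) :
    ∑ τ ∈ Gam p N σ, F τ =
      (∑ τ ∈ (Gam p N σ).filter (fun τ => τ.getLastD 0 = σ.getLastD 0), F τ) +
      ∑ τ ∈ (Gam p N σ).filter (fun τ => τ.getLastD 0 = σ.getLastD 0 + N), F τ := by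
  classical
  rw [← Finset.sum_filter_add_sum_filter_not (Gam p N σ)
    (fun τ => τ.getLastD 0 = σ.getLastD 0) F]
  congr 1
  apply Finset.sum_congr _ (fun _ _ => rfl)
  apply Finset.filter_congr
  intro τ hτ
  rcases gam_last_mem hσ hτ with h | h
  · rw [h]; omega
  · rw [h]; omega

lemma muJ_split (hN : 0 < N) {σ : List ℕ} (hσ : σ ≠ []) :
    muJ p χ N σ = Ipart p χ N (σ.getLastD 0) σ + Ipart p χ N (σ.getLastD 0 + N) σ :=
  sum_Gam_split hN hσ _

lemma muJ_concat (hp0 : ∀ i j, 0 ≤ p i j) (hN : 0 < N) {σ : List ℕ} (hσ : σ ≠ [])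
    (j : ℕ) :
    muJ p χ N (σ ++ [j]) =
      Ipart p χ N (σ.getLastD 0) σ *
        (p (σ.getLastD 0) j + p (σ.getLastD 0) (j + N)) +
      Ipart p χ N (σ.getLastD 0 + N) σ *
        (p (σ.getLastD 0 + N) j + p (σ.getLastD 0 + N) (j + N)) := by
  rw [muJ_concat_sum hp0 hN hσ j, sum_Gam_split hN hσ]
  unfold Ipart
  rw [Finset.sum_mul, Finset.sum_mul]
  congr 1
  · apply Finset.sum_congr rfl
    intro τ hτ
    rw [(Finset.mem_filter.mp hτ).2]
  · apply Finset.sum_congr rfl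
    intro τ hτ
    rw [(Finset.mem_filter.mp hτ).2]

lemma Gam_singleton (i : ℕ) : Gam p N [i] = {[i], [i + N]} := by
  unfold Gam
  have : lifts N [i] = {[i], [i + N]} := by
    ext τ; simp [lifts]
  rw [this]
  apply Finset.filter_true_of_mem
  intro τ hτ
  simp only [Finset.mem_insert, Finset.mem_singleton] at hτ
  rcases hτ with rfl | rfl <;> exact List.isChain_singleton _

lemma muJ_singleton (hN : 0 < N) (i : ℕ) : muJ p χ N [i] = χ i + χ (i + N) := by
  unfold muJ
  rw [Gam_singleton]
  have hne : ([i] : List ℕ) ≠ [i + N] := by simp; omega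
  rw [Finset.sum_pair hne]
  simp [pword]

lemma Ipart_singleton_fst (hN : 0 < N) (i : ℕ) : Ipart p χ N i [i] = χ i := by
  unfold Ipart
  rw [Gam_singleton]
  have h2 : ¬ (([i + N] : List ℕ).getLastD 0 = i) := by
    show ¬ (i + N = i); omega
  rw [Finset.filter_insert, if_pos (show ([i] : List ℕ).getLastD 0 = i from rfl),
    Finset.filter_singleton, if_neg h2]
  simp [pword]

lemma Ipart_singleton_snd (hN : 0 < N) (i : ℕ) : Ipart p χ N (i + N) [i] = χ (i + N) := by
  unfold Ipart
  rw [Gam_singleton]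
  have h1 : ¬ (([i] : List ℕ).getLastD 0 = i + N) := by
    show ¬ (i = i + N); omega
  rw [Finset.filter_insert, if_neg h1, Finset.filter_singleton,
    if_pos (show ([i + N] : List ℕ).getLastD 0 = i + N from rfl)]
  simp [pword]

lemma muJ_pos (hχpos : ∀ i ∈ Finset.Icc 1 (2 * N), 0 < χ i) {σ : List ℕ}
    (hσ : isSword p N σ) : 0 < muJ p χ N σ := by
  obtain ⟨⟨hne, hmem⟩, hΓ⟩ := hσ
  apply Finset.sum_pos _ hΓ
  intro τ hτ
  obtain ⟨hlift, hchain⟩ := Finset.mem_filter.mp hτ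
  have hhead := (lifts_spec σ τ hlift).2.1
  have hh1 : σ.headD 0 ∈ Finset.Icc 1 N := by
    cases σ with
    | nil => exact absurd rfl hne
    | cons a l => exact hmem a (by simp)
  simp only [Finset.mem_Icc] at hh1
  have hχτ : 0 < χ (τ.headD 0) := by
    apply hχpos
    simp only [Finset.mem_Icc]
    rcases hhead with h | h <;> omega
  exact mul_pos hχτ (pword_pos hchain)

lemma muJ_nonneg (hp0 : ∀ i j, 0 ≤ p i j)
    (hχpos : ∀ i ∈ Finset.Icc 1 (2 * N), 0 < χ i) {σ : List ℕ} (hσ : σ ≠ [])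
    (hmem : ∀ x ∈ σ, x ∈ Finset.Icc 1 N) : 0 ≤ muJ p χ N σ := by
  apply Finset.sum_nonneg
  intro τ hτ
  obtain ⟨hlift, hchain⟩ := Finset.mem_filter.mp hτ
  refine mul_nonneg (le_of_lt ?_) (pword_pos hchain).le
  apply hχpos
  have hhead := (lifts_spec σ τ hlift).2.1
  cases σ with
  | nil => exact absurd rfl hσ
  | cons a l =>
    have ha := hmem a (by simp)
    simp only [Finset.mem_Icc] at ha ⊢
    simp only [List.headD_cons] at hhead
    rcases hhead with h | h <;> omega

lemma Ipart_nonneg (hp0 : ∀ i j, 0 ≤ p i j)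
    (hχpos : ∀ i ∈ Finset.Icc 1 (2 * N), 0 < χ i) {σ : List ℕ} (hσ : σ ≠ [])
    (hmem : ∀ x ∈ σ, x ∈ Finset.Icc 1 N) (i : ℕ) : 0 ≤ Ipart p χ N i σ := by
  apply Finset.sum_nonneg
  intro τ hτ
  obtain ⟨hτ', -⟩ := Finset.mem_filter.mp hτ
  obtain ⟨hlift, hchain⟩ := Finset.mem_filter.mp hτ'
  have hhead := (lifts_spec σ τ hlift).2.1
  refine mul_nonneg (le_of_lt ?_) (pword_pos hchain).le
  apply hχpos
  cases σ with
  | nil => exact absurd rfl hσ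
  | cons a l =>
    have ha := hmem a (by simp)
    simp only [Finset.mem_Icc] at ha ⊢
    simp only [List.headD_cons] at hhead
    rcases hhead with h | h <;> omega

lemma sum_plus_split (f : ℕ → ℝ) (hN : 0 < N) :
    ∑ j ∈ Finset.Icc 1 N, (f j + f (j + N)) = ∑ j ∈ Finset.Icc 1 (2 * N), f j := by
  rw [Finset.sum_add_distrib]
  have h2 : ∑ j ∈ Finset.Icc 1 N, f (j + N) = ∑ j ∈ Finset.Icc (N + 1) (2 * N), f j := by
    apply Finset.sum_nbij' (fun j => j + N) (fun j => j - N) <;>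
      intros <;> simp_all [Finset.mem_Icc] <;> omega
  rw [h2]
  have hunion : Finset.Icc 1 (2 * N) = Finset.Icc 1 N ∪ Finset.Icc (N + 1) (2 * N) := by
    ext x; simp [Finset.mem_Icc]; omega
  rw [hunion, Finset.sum_union (by
    simp only [Finset.disjoint_left, Finset.mem_Icc]
    intro a h1 h2
    omega)]


lemma getLastD_mem : ∀ {l : List ℕ}, l ≠ [] → ∀ d : ℕ, l.getLastD d ∈ l
  | [], h => absurd rfl h
  | [a], _ => fun d => by simp [List.getLastD_cons]
  | a :: b :: t, _ => fun d => by
    rw [getLastD_cons_ne_nil (by simp)]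
    exact List.mem_cons_of_mem a (getLastD_mem (by simp) d)

lemma forward_core (N : ℕ) (a b c : ℕ → ℝ) (χ1 χ2 I1 I2 : ℝ)
    (hχ1 : 0 < χ1) (hχ2 : 0 < χ2)
    (ha0 : ∀ j ∈ Finset.Icc 1 N, 0 ≤ a j) (hb0 : ∀ j ∈ Finset.Icc 1 N, 0 ≤ b j)
    (hc0 : ∀ j ∈ Finset.Icc 1 N, 0 ≤ c j)
    (hI10 : 0 ≤ I1) (hI20 : 0 ≤ I2) (hIpos : 0 < I1 + I2)
    (hsa : ∑ j ∈ Finset.Icc 1 N, a j = 1) (hsb : ∑ j ∈ Finset.Icc 1 N, b j = 1)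
    (hsc : ∑ j ∈ Finset.Icc 1 N, c j = 1)
    (step1 : ∀ j ∈ Finset.Icc 1 N,
      χ1 * a j + χ2 * b j = 0 ∨ χ1 * a j + χ2 * b j = (χ1 + χ2) * c j)
    (step2 : ∀ j ∈ Finset.Icc 1 N,
      I1 * a j + I2 * b j = 0 ∨ I1 * a j + I2 * b j = (I1 + I2) * c j)
    (j₀ : ℕ) (hj₀ : j₀ ∈ Finset.Icc 1 N) (hne : a j₀ ≠ b j₀) :
    χ2 * I1 = χ1 * I2 := by
  by_cases hI1z : I1 = 0
  · exfalso
    have hI2p : 0 < I2 := by rw [hI1z] at hIpos; linarith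
    have hbc : ∀ j ∈ Finset.Icc 1 N, b j ≤ c j := by
      intro j hj
      rcases step2 j hj with h | h
      · rw [hI1z] at h
        have h2 : I2 * b j = 0 := by linarith
        have hb : b j = 0 := (mul_eq_zero.mp h2).resolve_left (ne_of_gt hI2p)
        rw [hb]; exact hc0 j hj
      · rw [hI1z] at h
        have h2 : I2 * b j = I2 * c j := by linarith
        exact le_of_eq (mul_left_cancel₀ (ne_of_gt hI2p) h2)
    have hbc' : ∀ j ∈ Finset.Icc 1 N, b j = c j :=
      (Finset.sum_eq_sum_iff_of_le hbc).mp (by rw [hsb, hsc])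
    have hab : ∀ j ∈ Finset.Icc 1 N, a j = b j := by
      intro j hj
      rcases step1 j hj with h | h
      · have hca : χ1 * a j = 0 :=
          le_antisymm (by nlinarith [mul_nonneg hχ2.le (hb0 j hj)])
            (mul_nonneg hχ1.le (ha0 j hj))
        have hcb : χ2 * b j = 0 :=
          le_antisymm (by nlinarith [mul_nonneg hχ1.le (ha0 j hj)])
            (mul_nonneg hχ2.le (hb0 j hj))
        have ha : a j = 0 := (mul_eq_zero.mp hca).resolve_left (ne_of_gt hχ1)
        have hb : b j = 0 := (mul_eq_zero.mp hcb).resolve_left (ne_of_gt hχ2)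
        rw [ha, hb]
      · rw [← hbc' j hj] at h
        have h2 : χ1 * a j = χ1 * b j := by linarith
        exact mul_left_cancel₀ (ne_of_gt hχ1) h2
    exact hne (hab j₀ hj₀)
  by_cases hI2z : I2 = 0
  · exfalso
    have hI1p : 0 < I1 := by rw [hI2z] at hIpos; linarith
    have hac : ∀ j ∈ Finset.Icc 1 N, a j ≤ c j := by
      intro j hj
      rcases step2 j hj with h | h
      · rw [hI2z] at h
        have h2 : I1 * a j = 0 := by linarith
        have ha : a j = 0 := (mul_eq_zero.mp h2).resolve_left (ne_of_gt hI1p)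
        rw [ha]; exact hc0 j hj
      · rw [hI2z] at h
        have h2 : I1 * a j = I1 * c j := by linarith
        exact le_of_eq (mul_left_cancel₀ (ne_of_gt hI1p) h2)
    have hac' : ∀ j ∈ Finset.Icc 1 N, a j = c j :=
      (Finset.sum_eq_sum_iff_of_le hac).mp (by rw [hsa, hsc])
    have hab : ∀ j ∈ Finset.Icc 1 N, a j = b j := by
      intro j hj
      rcases step1 j hj with h | h
      · have hca : χ1 * a j = 0 :=
          le_antisymm (by nlinarith [mul_nonneg hχ2.le (hb0 j hj)])
            (mul_nonneg hχ1.le (ha0 j hj))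
        have hcb : χ2 * b j = 0 :=
          le_antisymm (by nlinarith [mul_nonneg hχ1.le (ha0 j hj)])
            (mul_nonneg hχ2.le (hb0 j hj))
        have ha : a j = 0 := (mul_eq_zero.mp hca).resolve_left (ne_of_gt hχ1)
        have hb : b j = 0 := (mul_eq_zero.mp hcb).resolve_left (ne_of_gt hχ2)
        rw [ha, hb]
      · rw [← hac' j hj] at h
        have h2 : χ2 * b j = χ2 * a j := by linarith
        exact (mul_left_cancel₀ (ne_of_gt hχ2) h2).symm
    exact hne (hab j₀ hj₀)
  have hI1p : 0 < I1 := lt_of_le_of_ne hI10 (Ne.symm hI1z)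
  have hI2p : 0 < I2 := lt_of_le_of_ne hI20 (Ne.symm hI2z)
  have hab0 : 0 < a j₀ ∨ 0 < b j₀ := by
    by_contra hcon
    push_neg at hcon
    have h1 : a j₀ = 0 := le_antisymm hcon.1 (ha0 j₀ hj₀)
    have h2 : b j₀ = 0 := le_antisymm hcon.2 (hb0 j₀ hj₀)
    exact hne (h1.trans h2.symm)
  have hpos2 : 0 < I1 * a j₀ + I2 * b j₀ := by
    rcases hab0 with h | h
    · nlinarith [mul_pos hI1p h, mul_nonneg hI2p.le (hb0 j₀ hj₀)]
    · nlinarith [mul_pos hI2p h, mul_nonneg hI1p.le (ha0 j₀ hj₀)]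
  have hpos1 : 0 < χ1 * a j₀ + χ2 * b j₀ := by
    rcases hab0 with h | h
    · nlinarith [mul_pos hχ1 h, mul_nonneg hχ2.le (hb0 j₀ hj₀)]
    · nlinarith [mul_pos hχ2 h, mul_nonneg hχ1.le (ha0 j₀ hj₀)]
  have E1 : I1 * a j₀ + I2 * b j₀ = (I1 + I2) * c j₀ :=
    (step2 j₀ hj₀).resolve_left (ne_of_gt hpos2)
  have E2 : χ1 * a j₀ + χ2 * b j₀ = (χ1 + χ2) * c j₀ :=
    (step1 j₀ hj₀).resolve_left (ne_of_gt hpos1)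
  have h5 : (b j₀ - a j₀) * (χ1 * I2 - χ2 * I1) = 0 := by
    linear_combination (χ1 + χ2) * E1 - (I1 + I2) * E2
  rcases mul_eq_zero.mp h5 with h | h
  · exact absurd (sub_eq_zero.mp h).symm hne
  · linarith [sub_eq_zero.mp h]


end Aux

/-- **Theorem (Zhu, Theorem 1.1(1)).** Assume (A2) and (A5). Then `μ` is reducible if and
only if for every `i ∈ Ψ` either (a) `p_{i,j} + p_{i,j⁺} = p_{i⁺,j} + p_{i⁺,j⁺}` for every
`j ∈ Ψ`, or (b) `χ_{i⁺} I_{1,σ} = χ_i I_{2,σ}` for every `σ ∈ 𝒮^*(i)`. -/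
theorem stmt0
    (N q : ℕ) (hN : 2 ≤ N) (hq : 1 ≤ q) (r : ℝ) (hr : 0 < r)
    (p : ℕ → ℕ → ℝ) (χ : ℕ → ℝ)
    (hp0 : ∀ i j, 0 ≤ p i j)
    (hpsupp : ∀ i j, 0 < p i j → i ∈ Finset.Icc 1 (2 * N) ∧ j ∈ Finset.Icc 1 (2 * N))
    (hpsum : ∀ i ∈ Finset.Icc 1 (2 * N), ∑ j ∈ Finset.Icc 1 (2 * N), p i j = 1)
    (hχpos : ∀ i ∈ Finset.Icc 1 (2 * N), 0 < χ i)
    (hχsum : ∑ i ∈ Finset.Icc 1 (2 * N), χ i = 1)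
    (sr : ℕ → ℕ → ℝ)
    (T : ℕ → ℕ → EuclideanSpace ℝ (Fin q) → EuclideanSpace ℝ (Fin q))
    (J : ℕ → Set (EuclideanSpace ℝ (Fin q)))
    (hTinv : ∀ i ∈ Finset.Icc 1 N, ∀ j ∈ Finset.Icc 1 N, ∀ a b : ℕ,
      (a = i ∨ a = i + N) → (b = j ∨ b = j + N) → 0 < p a b →
      T a b = T i j ∧ sr a b = sr i j)
    (hsim : ∀ i ∈ Finset.Icc 1 N, ∀ j ∈ Finset.Icc 1 N, isSword p N [i, j] →
      0 < sr i j ∧ sr i j < 1 ∧ ∀ x y, dist (T i j x) (T i j y) = sr i j * dist x y)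
    (hJcpt : ∀ i ∈ Finset.Icc 1 N,
      IsCompact (J i) ∧ (J i).Nonempty ∧ closure (interior (J i)) = J i ∧
        Metric.diam (J i) = 1)
    (hJdisj : ∀ i ∈ Finset.Icc 1 N, ∀ j ∈ Finset.Icc 1 N, i ≠ j → Disjoint (J i) (J j))
    (hJplus : ∀ i ∈ Finset.Icc 1 N, J (i + N) = J i)
    (hnest : ∀ i ∈ Finset.Icc 1 N, ∀ j ∈ Finset.Icc 1 N, isSword p N [i, j] →
      T i j '' J j ⊆ J i)
    (hTdisj : ∀ i ∈ Finset.Icc 1 N, ∀ j ∈ Finset.Icc 1 N, ∀ l ∈ Finset.Icc 1 N,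
      isSword p N [i, j] → isSword p N [i, l] → j ≠ l →
      Disjoint (T i j '' J j) (T i l '' J l))
    (μ : Measure (EuclideanSpace ℝ (Fin q))) [IsProbabilityMeasure μ]
    (hμ : ∀ σ : List ℕ, isSword p N σ →
      μ (Jword T J σ) = ENNReal.ofReal (muJ p χ N σ))
    (hA2 : A2 p N) (hA5 : A5 p N) :
    reducible p N T J μ ↔
      ∀ i ∈ Finset.Icc 1 N,
        (∀ j ∈ Finset.Icc 1 N, p i j + p i (j + N) = p (i + N) j + p (i + N) (j + N)) ∨
        (∀ σ : List ℕ, isSword p N σ → σ.getLastD 0 = i →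
          χ (i + N) * Ipart p χ N i σ = χ i * Ipart p χ N (i + N) σ) := by
  classical
  have hN0 : 0 < N := by omega
  have hmemΩ : ∀ i ∈ Finset.Icc 1 N,
      i ∈ Finset.Icc 1 (2 * N) ∧ i + N ∈ Finset.Icc 1 (2 * N) := by
    intro i hi
    simp only [Finset.mem_Icc] at *
    omega
  have hSsing : ∀ i ∈ Finset.Icc 1 N, isSword p N [i] := by
    intro i hi
    refine ⟨⟨by simp, ?_⟩, ?_⟩
    · intro x hx
      simp only [List.mem_singleton] at hx
      subst hx
      exact hi
    · rw [Gam_singleton]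
      exact Finset.insert_nonempty _ _
  have hsum_pair : ∀ l ∈ Finset.Icc 1 (2 * N),
      ∑ j ∈ Finset.Icc 1 N, (p l j + p l (j + N)) = 1 := by
    intro l hl
    rw [sum_plus_split (fun x => p l x) hN0]
    exact hpsum l hl
  constructor
  · rintro ⟨pt, χt, hptnn, hptsum, hχtpos, hχtsum, hrep⟩ i hi
    by_cases hacond : ∀ j ∈ Finset.Icc 1 N,
        p i j + p i (j + N) = p (i + N) j + p (i + N) (j + N)
    · exact Or.inl hacond
    right
    push_neg at hacond
    obtain ⟨j₀, hj₀, hne0⟩ := hacond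
    have rep' : ∀ σ, isSword p N σ → muJ p χ N σ = χt (σ.headD 0) * pword pt σ := by
      intro σ hσ
      have h1 := hμ σ hσ
      have h2 := hrep σ hσ
      have hpos : 0 < muJ p χ N σ := muJ_pos hχpos hσ
      have hh : σ.headD 0 ∈ Finset.Icc 1 N := by
        obtain ⟨⟨hne, hmem⟩, -⟩ := hσ
        cases σ with
        | nil => exact absurd rfl hne
        | cons c l => exact hmem c (by simp)
      have hnn2 : 0 ≤ χt (σ.headD 0) * pword pt σ := by
        refine mul_nonneg (hχtpos _ hh).le (pword_nonneg ?_)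
        intro x hx y hy
        exact hptnn x (hσ.1.2 x hx) y (hσ.1.2 y hy)
      exact (ENNReal.ofReal_eq_ofReal_iff hpos.le hnn2).mp (h1.symm.trans h2)
    have key : ∀ σ : List ℕ, isSword p N σ → ∀ j ∈ Finset.Icc 1 N,
        muJ p χ N (σ ++ [j]) = 0 ∨
          muJ p χ N (σ ++ [j]) = muJ p χ N σ * pt (σ.getLastD 0) j := by
      intro σ hσ j hj
      by_cases hz : muJ p χ N (σ ++ [j]) = 0
      · exact Or.inl hz
      right
      have hσne : σ ≠ [] := hσ.1.1
      have hSσj : isSword p N (σ ++ [j]) := by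
        refine ⟨⟨by simp, ?_⟩, ?_⟩
        · intro x hx
          rcases List.mem_append.mp hx with h | h
          · exact hσ.1.2 x h
          · simp only [List.mem_singleton] at h
            subst h; exact hj
        · by_contra hemp
          rw [Finset.not_nonempty_iff_eq_empty] at hemp
          exact hz (by unfold muJ; rw [hemp, Finset.sum_empty])
      have e1 := rep' (σ ++ [j]) hSσj
      have e2 := rep' σ hσ
      rw [headD_concat hσne, pword_concat j hσne] at e1
      rw [e1, ← mul_assoc, ← e2]
    intro σ hσS hlast
    have hσne : σ ≠ [] := hσS.1.1
    have hχi : 0 < χ i := hχpos i (hmemΩ i hi).1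
    have hχi' : 0 < χ (i + N) := hχpos (i + N) (hmemΩ i hi).2
    have step1 : ∀ j ∈ Finset.Icc 1 N,
        χ i * (p i j + p i (j + N)) + χ (i + N) * (p (i + N) j + p (i + N) (j + N)) = 0 ∨
        χ i * (p i j + p i (j + N)) + χ (i + N) * (p (i + N) j + p (i + N) (j + N)) =
          (χ i + χ (i + N)) * pt i j := by
      intro j hj
      have hk := key [i] (hSsing i hi) j hj
      rw [muJ_concat hp0 hN0 (by simp) j,
        show (([i] : List ℕ)).getLastD 0 = i from rfl,
        Ipart_singleton_fst hN0, Ipart_singleton_snd hN0, muJ_singleton hN0] at hk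
      exact hk
    have step2 : ∀ j ∈ Finset.Icc 1 N,
        Ipart p χ N i σ * (p i j + p i (j + N)) +
          Ipart p χ N (i + N) σ * (p (i + N) j + p (i + N) (j + N)) = 0 ∨
        Ipart p χ N i σ * (p i j + p i (j + N)) +
          Ipart p χ N (i + N) σ * (p (i + N) j + p (i + N) (j + N)) =
          (Ipart p χ N i σ + Ipart p χ N (i + N) σ) * pt i j := by
      intro j hj
      have hk := key σ hσS j hj
      rw [muJ_concat hp0 hN0 hσne j, muJ_split hN0 hσne, hlast] at hk
      exact hk
    have hIpos : 0 < Ipart p χ N i σ + Ipart p χ N (i + N) σ := by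
      have := muJ_pos hχpos hσS
      rw [muJ_split hN0 hσne, hlast] at this
      exact this
    refine forward_core N (fun j => p i j + p i (j + N))
      (fun j => p (i + N) j + p (i + N) (j + N)) (fun j => pt i j)
      (χ i) (χ (i + N)) (Ipart p χ N i σ) (Ipart p χ N (i + N) σ)
      hχi hχi' (fun j _ => add_nonneg (hp0 _ _) (hp0 _ _))
      (fun j _ => add_nonneg (hp0 _ _) (hp0 _ _)) (fun j hj => hptnn i hi j hj)
      (Ipart_nonneg hp0 hχpos hσne hσS.1.2 i)
      (Ipart_nonneg hp0 hχpos hσne hσS.1.2 (i + N)) hIpos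
      (hsum_pair i (hmemΩ i hi).1) (hsum_pair (i + N) (hmemΩ i hi).2)
      (hptsum i hi) step1 step2 j₀ hj₀ hne0
  · intro hcond
    refine ⟨fun i j => (χ i * (p i j + p i (j + N)) +
        χ (i + N) * (p (i + N) j + p (i + N) (j + N))) / (χ i + χ (i + N)),
      fun i => χ i + χ (i + N), ?_, ?_, ?_, ?_, ?_⟩
    · intro i hi j hj
      have hχi : 0 < χ i := hχpos i (hmemΩ i hi).1
      have hχi' : 0 < χ (i + N) := hχpos (i + N) (hmemΩ i hi).2
      apply div_nonneg _ (by linarith)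
      have := hp0 i j
      have := hp0 i (j + N)
      have := hp0 (i + N) j
      have := hp0 (i + N) (j + N)
      nlinarith
    · intro i hi
      have hχi : 0 < χ i := hχpos i (hmemΩ i hi).1
      have hχi' : 0 < χ (i + N) := hχpos (i + N) (hmemΩ i hi).2
      rw [← Finset.sum_div]
      rw [Finset.sum_add_distrib, ← Finset.mul_sum, ← Finset.mul_sum,
        hsum_pair i (hmemΩ i hi).1, hsum_pair (i + N) (hmemΩ i hi).2]
      rw [mul_one, mul_one]
      exact div_self (by linarith)
    · intro i hi
      have hχi : 0 < χ i := hχpos i (hmemΩ i hi).1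
      have hχi' : 0 < χ (i + N) := hχpos (i + N) (hmemΩ i hi).2
      show 0 < χ i + χ (i + N)
      linarith
    · rw [sum_plus_split χ hN0]
      exact hχsum
    · have main : ∀ σ : List ℕ, isSword p N σ →
          muJ p χ N σ = (χ (σ.headD 0) + χ (σ.headD 0 + N)) *
            pword (fun i j => (χ i * (p i j + p i (j + N)) +
              χ (i + N) * (p (i + N) j + p (i + N) (j + N))) / (χ i + χ (i + N))) σ := by
        intro σ
        induction σ using List.reverseRecOn with
        | nil => intro h; exact absurd rfl h.1.1
        | append_singleton τ j ih =>
          intro hσ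
          rcases eq_or_ne τ [] with rfl | hτne
          · simp only [List.nil_append]
            rw [muJ_singleton hN0]
            simp [pword]
          · have hjΨ : j ∈ Finset.Icc 1 N := hσ.1.2 j (by simp)
            have hτmem : ∀ x ∈ τ, x ∈ Finset.Icc 1 N := fun x hx =>
              hσ.1.2 x (List.mem_append.mpr (Or.inl hx))
            have hτS : isSword p N τ := by
              refine ⟨⟨hτne, hτmem⟩, ?_⟩
              obtain ⟨τ', hτ'⟩ := hσ.2
              unfold Gam at hτ'
              rw [lifts_concat] at hτ'
              obtain ⟨hτ'lift, hτ'chain⟩ := Finset.mem_filter.mp hτ'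
              obtain ⟨l, hl, hτ'eq⟩ := Finset.mem_biUnion.mp hτ'lift
              simp only [Finset.mem_insert, Finset.mem_singleton] at hτ'eq
              have hlne : l ≠ [] := mem_lifts_ne_nil hl hτne
              refine ⟨l, Finset.mem_filter.mpr ⟨hl, ?_⟩⟩
              rcases hτ'eq with rfl | rfl
              · exact ((chain'_concat j hlne).mp hτ'chain).1
              · exact ((chain'_concat (j + N) hlne).mp hτ'chain).1
            have hiΨ : τ.getLastD 0 ∈ Finset.Icc 1 N := hτmem _ (getLastD_mem hτne 0)
            set i := τ.getLastD 0 with hidef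
            have hχi : 0 < χ i := hχpos i (hmemΩ i hiΨ).1
            have hχi' : 0 < χ (i + N) := hχpos (i + N) (hmemΩ i hiΨ).2
            have hkey : (p (i + N) j + p (i + N) (j + N) - (p i j + p i (j + N))) *
                (χ i * Ipart p χ N (i + N) τ - χ (i + N) * Ipart p χ N i τ) = 0 := by
              rcases hcond i hiΨ with hA | hB
              · rw [hA j hjΨ]
                ring
              · rw [hB τ hτS hidef.symm]
                ring
            rw [muJ_concat hp0 hN0 hτne j, headD_concat hτne, pword_concat j hτne,
              ← mul_assoc, ← ih hτS, muJ_split hN0 hτne, ← hidef]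
            rw [mul_div_assoc', eq_div_iff (by linarith : χ i + χ (i + N) ≠ 0)]
            linear_combination hkey
      intro σ hσ
      rw [hμ σ hσ, main σ hσ]

end MTM

end
end

section
/- Assume (A2), (A4), (A5), that χ_i = χ_{i⁺} for every i ∈ Ψ, and that p_{l,i} + p_{l⁺,i} = p_{l,i⁺} + p_{l⁺,i⁺} for every (l,i) ∈ 𝒮₂. Then μ is reducible. -/
open scoped Classical ENNReal
open Filter MeasureTheory

noncomputable section

namespace MTM

/-- auxiliary relation: all four lifted edges are positive and column sums agree. -/
def goodPair (p : ℕ → ℕ → ℝ) (N a b : ℕ) : Prop :=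
  0 < p a b ∧ 0 < p a (b + N) ∧ 0 < p (a + N) b ∧ 0 < p (a + N) (b + N) ∧
    p a b + p (a + N) b = p a (b + N) + p (a + N) (b + N)

lemma mem_lifts_cons {N : ℕ} {τ : List ℕ} {i : ℕ} {t : List ℕ} :
    τ ∈ lifts N (i :: t) ↔ ∃ l ∈ lifts N t, τ = i :: l ∨ τ = (i + N) :: l := by
  simp [lifts]

lemma self_mem_lifts {N : ℕ} : ∀ σ : List ℕ, σ ∈ lifts N σ
  | [] => by simp [lifts]
  | i :: t => mem_lifts_cons.2 ⟨t, self_mem_lifts t, Or.inl rfl⟩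

lemma length_of_mem_lifts {N : ℕ} : ∀ {σ τ : List ℕ}, τ ∈ lifts N σ → τ.length = σ.length
  | [], τ, h => by simp [lifts] at h; simp [h]
  | _ :: t, τ, h => by
    obtain ⟨l, hl, rfl | rfl⟩ := mem_lifts_cons.1 h <;>
      simp [length_of_mem_lifts hl]

lemma pword_cons (p : ℕ → ℕ → ℝ) {l : List ℕ} (hl : l ≠ []) (a : ℕ) :
    pword p (a :: l) = p a (l.headD 0) * pword p l := by
  cases l with
  | nil => exact absurd rfl hl
  | cons b t => rfl

lemma headD_of_mem_lifts {N : ℕ} {σ τ : List ℕ} (hσ : σ ≠ []) (h : τ ∈ lifts N σ) :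
    τ.headD 0 = σ.headD 0 ∨ τ.headD 0 = σ.headD 0 + N := by
  cases σ with
  | nil => exact absurd rfl hσ
  | cons i t => obtain ⟨l, _, rfl | rfl⟩ := mem_lifts_cons.1 h <;> simp

lemma isSword_pair {p : ℕ → ℕ → ℝ} {N i j : ℕ} (hi : i ∈ Finset.Icc 1 N)
    (hj : j ∈ Finset.Icc 1 N) (hp : 0 < p i j) : isSword p N [i, j] := by
  refine ⟨⟨by simp, ?_⟩, ⟨[i, j], ?_⟩⟩
  · intro x hx
    simp only [List.mem_cons, List.not_mem_nil, or_false] at hx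
    rcases hx with rfl | rfl <;> assumption
  · exact Finset.mem_filter.2 ⟨self_mem_lifts _, List.isChain_pair.2 hp⟩

lemma chain'_edge_of_lifts {p : ℕ → ℕ → ℝ} {N : ℕ} :
    ∀ {σ τ : List ℕ}, τ ∈ lifts N σ → σ.Chain' (goodPair p N) → τ.Chain' (edge p)
  | [], τ, h, _ => by simp [lifts] at h; simp [h, List.Chain']
  | [i], τ, h, _ => by
    obtain ⟨l, hl, rfl | rfl⟩ := mem_lifts_cons.1 h <;>
      · simp [lifts] at hl; subst hl; exact List.isChain_singleton _
  | i :: j :: t, τ, h, hc => by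
    obtain ⟨l, hl, rfl | rfl⟩ := mem_lifts_cons.1 h <;>
    · obtain ⟨m, hm, rfl | rfl⟩ := mem_lifts_cons.1 hl <;>
      · show List.IsChain _ _; rw [List.isChain_cons_cons]
        have hg := (List.isChain_cons_cons.1 hc).1
        have htail := (List.isChain_cons_cons.1 hc).2
        exact ⟨by first
          | exact hg.1 | exact hg.2.1 | exact hg.2.2.1 | exact hg.2.2.2.1,
          chain'_edge_of_lifts hl htail⟩

lemma chain'_good_of_sword {p : ℕ → ℕ → ℝ} {N : ℕ} (hA4 : A4 p N)
    (hcol : ∀ l ∈ Finset.Icc 1 N, ∀ i ∈ Finset.Icc 1 N, isSword p N [l, i] →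
      p l i + p (l + N) i = p l (i + N) + p (l + N) (i + N)) :
    ∀ {σ τ : List ℕ}, (∀ x ∈ σ, x ∈ Finset.Icc 1 N) → τ ∈ lifts N σ →
      τ.Chain' (edge p) → σ.Chain' (goodPair p N)
  | [], _, _, _, _ => List.isChain_nil
  | [_], _, _, _, _ => List.isChain_singleton _
  | i :: j :: t, τ, hΨ, hτ, hce => by
    have hi : i ∈ Finset.Icc 1 N := hΨ i (by simp)
    have hj : j ∈ Finset.Icc 1 N := hΨ j (by simp)
    obtain ⟨l, hl, rfl | rfl⟩ := mem_lifts_cons.1 hτ <;>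
    · obtain ⟨m, hm, rfl | rfl⟩ := mem_lifts_cons.1 hl <;>
      · have h1 := (List.isChain_cons_cons.1 hce).1
        have h2 := (List.isChain_cons_cons.1 hce).2
        have hIH : (j :: t).Chain' (goodPair p N) :=
          chain'_good_of_sword hA4 hcol (fun x hx => hΨ x (List.mem_cons_of_mem _ hx))
            hl h2
        show List.IsChain _ _; rw [List.isChain_cons_cons]
        refine ⟨?_, hIH⟩
        rcases hA4 i hi j hj with ⟨z1, z2, z3, z4⟩ | ⟨q1, q2, q3, q4⟩
        · exfalso; simp only [edge] at h1; linarith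
        · exact ⟨q1, q2, q3, q4, hcol i hi j hj (isSword_pair hi hj q1)⟩

lemma sum_pword_lifts {p : ℕ → ℕ → ℝ} {N : ℕ} (hN : 0 < N) :
    ∀ σ : List ℕ, σ ≠ [] → σ.Chain' (goodPair p N) →
      ∑ τ ∈ lifts N σ, pword p τ = 2 * pword (fun a b => p a b + p (a + N) b) σ
  | [], h, _ => absurd rfl h
  | [i], _, _ => by
    have hne : ([i] : List ℕ) ≠ [i + N] := by simp; omega
    simp [lifts, Finset.sum_pair hne, pword]; norm_num
  | i :: j :: t, _, hc => by
    have hjt : (j :: t) ≠ [] := by simp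
    have hIH := sum_pword_lifts hN (j :: t) hjt (List.isChain_cons_cons.1 hc).2
    have hg := (List.isChain_cons_cons.1 hc).1
    have hdisj : (↑(lifts N (j :: t)) : Set (List ℕ)).PairwiseDisjoint
        (fun l => ({i :: l, (i + N) :: l} : Finset (List ℕ))) := by
      intro l1 _ l2 _ hne
      simp only [Finset.disjoint_left, Finset.mem_insert, Finset.mem_singleton]
      rintro τ (rfl | rfl) (h | h) <;> exact hne (by injection h) |>.elim
    have : lifts N (i :: j :: t) =
        (lifts N (j :: t)).biUnion fun l => {i :: l, (i + N) :: l} := rfl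
    rw [this, Finset.sum_biUnion hdisj]
    have hstep : ∀ l ∈ lifts N (j :: t),
        ∑ τ ∈ ({i :: l, (i + N) :: l} : Finset (List ℕ)), pword p τ
          = (p i j + p (i + N) j) * pword p l := by
      intro l hl
      have hlne : l ≠ [] := by
        intro h; have := length_of_mem_lifts hl; rw [h] at this; simp at this
      have hcons : (i :: l) ≠ ((i + N) :: l) := by simp; omega
      rw [Finset.sum_pair hcons, pword_cons p hlne, pword_cons p hlne]
      rcases headD_of_mem_lifts hjt hl with hh | hh
      · simp only [List.headD_cons] at hh
        rw [hh]; ring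
      · simp only [List.headD_cons] at hh
        rw [hh, ← add_mul, ← hg.2.2.2.2, add_mul]
    rw [Finset.sum_congr rfl hstep, ← Finset.mul_sum, hIH,
      pword_cons _ hjt]
    simp only [List.headD_cons]
    ring

lemma muJ_eq {p : ℕ → ℕ → ℝ} {χ : ℕ → ℝ} {N : ℕ} (hN : 0 < N)
    (hb1 : ∀ i ∈ Finset.Icc 1 N, χ i = χ (i + N))
    {σ : List ℕ} (hσne : σ ≠ []) (hσΨ : ∀ x ∈ σ, x ∈ Finset.Icc 1 N)
    (hchain : σ.Chain' (goodPair p N)) :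
    muJ p χ N σ = (2 * χ (σ.headD 0)) * pword (fun a b => p a b + p (a + N) b) σ := by
  have hGam : Gam p N σ = lifts N σ :=
    Finset.filter_true_of_mem fun τ hτ => chain'_edge_of_lifts hτ hchain
  have hheadmem : σ.headD 0 ∈ Finset.Icc 1 N := by
    cases σ with
    | nil => exact absurd rfl hσne
    | cons a t => exact hσΨ a (by simp)
  have hhead : ∀ τ ∈ lifts N σ, χ (τ.headD 0) = χ (σ.headD 0) := by
    intro τ hτ
    rcases headD_of_mem_lifts hσne hτ with h | h
    · rw [h]
    · rw [h, ← hb1 _ hheadmem]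
  rw [muJ, hGam, Finset.sum_congr rfl fun τ hτ => by rw [hhead τ hτ],
    ← Finset.mul_sum, sum_pword_lifts hN σ hσne hchain]
  ring

lemma sum_split (N : ℕ) (f : ℕ → ℝ) :
    ∑ j ∈ Finset.Icc 1 (2 * N), f j = ∑ i ∈ Finset.Icc 1 N, (f i + f (i + N)) := by
  rw [Finset.sum_add_distrib]
  have h0 : ∀ m : ℕ, Finset.Icc 1 m = Finset.Ioc 0 m := fun m => by
    rw [← Finset.Icc_add_one_left_eq_Ioc, zero_add]
  have h1 : Finset.Ioc 0 (2 * N) = Finset.Ioc 0 N ∪ Finset.Ioc N (2 * N) :=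
    (Finset.Ioc_union_Ioc_eq_Ioc (Nat.zero_le N) (by omega)).symm
  have h2 : ∑ j ∈ Finset.Ioc N (2 * N), f j = ∑ i ∈ Finset.Ioc 0 N, f (i + N) := by
    have hmap : Finset.Ioc N (2 * N) =
        (Finset.Ioc 0 N).map ⟨fun i => i + N, add_left_injective N⟩ := by
      ext j; simp only [Finset.mem_Ioc, Finset.mem_map, Function.Embedding.coeFn_mk]
      constructor
      · intro h; exact ⟨j - N, by omega, by omega⟩
      · rintro ⟨i, hi, rfl⟩
        show N < i + N ∧ i + N ≤ 2 * N
        omega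
    rw [hmap, Finset.sum_map]; rfl
  rw [h0, h0, h1, Finset.sum_union (by simp only [Finset.disjoint_left, Finset.mem_Ioc]; intro a h1 h2; omega), h2]

/-- **Corollary 2.4.** Assume (A2), (A4), (A5), that `χ_i = χ_{i⁺}` for every `i ∈ Ψ` and
that `p_{l,i} + p_{l⁺,i} = p_{l,i⁺} + p_{l⁺,i⁺}` for every `(l,i) ∈ 𝒮₂`. Then `μ` is
reducible. -/
theorem stmt3
    (N q : ℕ) (hN : 2 ≤ N) (hq : 1 ≤ q) (r : ℝ) (hr : 0 < r)
    (p : ℕ → ℕ → ℝ) (χ : ℕ → ℝ)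
    (hp0 : ∀ i j, 0 ≤ p i j)
    (hpsupp : ∀ i j, 0 < p i j → i ∈ Finset.Icc 1 (2 * N) ∧ j ∈ Finset.Icc 1 (2 * N))
    (hpsum : ∀ i ∈ Finset.Icc 1 (2 * N), ∑ j ∈ Finset.Icc 1 (2 * N), p i j = 1)
    (hχpos : ∀ i ∈ Finset.Icc 1 (2 * N), 0 < χ i)
    (hχsum : ∑ i ∈ Finset.Icc 1 (2 * N), χ i = 1)
    (sr : ℕ → ℕ → ℝ)
    (T : ℕ → ℕ → EuclideanSpace ℝ (Fin q) → EuclideanSpace ℝ (Fin q))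
    (J : ℕ → Set (EuclideanSpace ℝ (Fin q)))
    (hTinv : ∀ i ∈ Finset.Icc 1 N, ∀ j ∈ Finset.Icc 1 N, ∀ a b : ℕ,
      (a = i ∨ a = i + N) → (b = j ∨ b = j + N) → 0 < p a b →
      T a b = T i j ∧ sr a b = sr i j)
    (hsim : ∀ i ∈ Finset.Icc 1 N, ∀ j ∈ Finset.Icc 1 N, isSword p N [i, j] →
      0 < sr i j ∧ sr i j < 1 ∧ ∀ x y, dist (T i j x) (T i j y) = sr i j * dist x y)
    (hJcpt : ∀ i ∈ Finset.Icc 1 N,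
      IsCompact (J i) ∧ (J i).Nonempty ∧ closure (interior (J i)) = J i ∧
        Metric.diam (J i) = 1)
    (hJdisj : ∀ i ∈ Finset.Icc 1 N, ∀ j ∈ Finset.Icc 1 N, i ≠ j → Disjoint (J i) (J j))
    (hJplus : ∀ i ∈ Finset.Icc 1 N, J (i + N) = J i)
    (hnest : ∀ i ∈ Finset.Icc 1 N, ∀ j ∈ Finset.Icc 1 N, isSword p N [i, j] →
      T i j '' J j ⊆ J i)
    (hTdisj : ∀ i ∈ Finset.Icc 1 N, ∀ j ∈ Finset.Icc 1 N, ∀ l ∈ Finset.Icc 1 N,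
      isSword p N [i, j] → isSword p N [i, l] → j ≠ l →
      Disjoint (T i j '' J j) (T i l '' J l))
    (μ : Measure (EuclideanSpace ℝ (Fin q))) [IsProbabilityMeasure μ]
    (hμ : ∀ σ : List ℕ, isSword p N σ →
      μ (Jword T J σ) = ENNReal.ofReal (muJ p χ N σ))
    (hA2 : A2 p N) (hA4 : A4 p N) (hA5 : A5 p N)
    (hb1 : ∀ i ∈ Finset.Icc 1 N, χ i = χ (i + N))
    (hcol : ∀ l ∈ Finset.Icc 1 N, ∀ i ∈ Finset.Icc 1 N, isSword p N [l, i] →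
      p l i + p (l + N) i = p l (i + N) + p (l + N) (i + N)) :
    reducible p N T J μ := by
  have hNpos : 0 < N := by omega
  set pt : ℕ → ℕ → ℝ := fun a b => p a b + p (a + N) b with hpt
  set χt : ℕ → ℝ := fun i => 2 * χ i with hχt
  -- column equality for all pairs in Ψ²
  have hcol' : ∀ l ∈ Finset.Icc 1 N, ∀ i ∈ Finset.Icc 1 N,
      p l i + p (l + N) i = p l (i + N) + p (l + N) (i + N) := by
    intro l hl i hi
    rcases hA4 l hl i hi with ⟨z1, z2, z3, z4⟩ | ⟨q1, _, _, _⟩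
    · rw [z1, z2, z3, z4]
    · exact hcol l hl i hi (isSword_pair hl hi q1)
  have hmem2 : ∀ l ∈ Finset.Icc 1 N, l ∈ Finset.Icc 1 (2 * N) ∧
      l + N ∈ Finset.Icc 1 (2 * N) := by
    intro l hl; simp only [Finset.mem_Icc] at *; omega
  refine ⟨pt, χt, ?_, ?_, ?_, ?_, ?_⟩
  · intro i _ j _; exact add_nonneg (hp0 i j) (hp0 (i + N) j)
  · -- row sums
    intro l hl
    have hA : ∑ i ∈ Finset.Icc 1 N, (p l i + p l (i + N)) = 1 := by
      rw [← sum_split N (p l)]; exact hpsum l (hmem2 l hl).1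
    have hB : ∑ i ∈ Finset.Icc 1 N, (p (l + N) i + p (l + N) (i + N)) = 1 := by
      rw [← sum_split N (p (l + N))]; exact hpsum (l + N) (hmem2 l hl).2
    have hC : ∑ i ∈ Finset.Icc 1 N, (p l (i + N) + p (l + N) (i + N))
        = ∑ i ∈ Finset.Icc 1 N, (p l i + p (l + N) i) :=
      Finset.sum_congr rfl (fun i hi => (hcol' l hl i hi).symm)
    have hsplit : ∀ (f g : ℕ → ℝ), ∑ i ∈ Finset.Icc 1 N, (f i + g i)
        = (∑ i ∈ Finset.Icc 1 N, f i) + ∑ i ∈ Finset.Icc 1 N, g i :=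
      fun f g => Finset.sum_add_distrib
    simp only [hpt]
    rw [hsplit] at hA hB hC ⊢
    rw [hsplit] at hC
    linarith
  · intro i hi
    have : i ∈ Finset.Icc 1 (2 * N) := (hmem2 i hi).1
    have := hχpos i this
    simp only [hχt]; linarith
  · have : ∑ i ∈ Finset.Icc 1 N, (χ i + χ (i + N)) = 1 := by
      rw [← sum_split N χ]; exact hχsum
    have h2 : ∀ i ∈ Finset.Icc 1 N, χt i = χ i + χ (i + N) := by
      intro i hi; simp only [hχt]; rw [← hb1 i hi]; ring
    rw [Finset.sum_congr rfl h2]; exact this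
  · intro σ hσ
    obtain ⟨⟨hne, hΨ⟩, ⟨τ0, hτ0⟩⟩ := hσ
    rw [Gam, Finset.mem_filter] at hτ0
    have hchain : σ.Chain' (goodPair p N) :=
      chain'_good_of_sword hA4 hcol hΨ hτ0.1 hτ0.2
    rw [hμ σ ⟨⟨hne, hΨ⟩, ⟨τ0, by rw [Gam, Finset.mem_filter]; exact hτ0⟩⟩,
      muJ_eq hNpos hb1 hne hΨ hchain]

end MTM

end
end
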